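/- Let n, ℓ, k ∈ ℕ and p = d/n with 1 ≪ d = O(log n). The expected number of (ℓ,k)-blocking stars in G(n,p) satisfies E[X_{ℓ,k,n}] ∼ n · d^{ℓ+k}/(ℓ! k!) · e^{-d(ℓ+1)} as n → ∞. -/

import Mathlib

open MeasureTheory

/-- The binomial random graph `G(n,p)`, modelled as the product of Bernoulli(`p`)
measures over potential-edge indicators indexed by `Sym2 (Fin n)` (the diagonal
coordinates are irrelevant to the resulting graph). -/
noncomputable def gnp (n : ℕ) (p : ℝ) : Measure (Sym2 (Fin n) → Bool) :=
  Measure.pi fun _ => (PMF.bernoulli (min (Real.toNNReal p) 1) (min_le_right _ _)).toMeasure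

/-- The simple graph determined by an edge-indicator function. -/
def graphOf {n : ℕ} (ω : Sym2 (Fin n) → Bool) : SimpleGraph (Fin n) where
  Adj u v := u ≠ v ∧ ω s(u, v) = true
  symm := ⟨by
    intro u v h
    exact ⟨h.1.symm, by rw [Sym2.eq_swap]; exact h.2⟩⟩
  loopless := ⟨fun v h => h.1 rfl⟩

instance {n : ℕ} (ω : Sym2 (Fin n) → Bool) : DecidableRel (graphOf ω).Adj :=
  fun u v => show Decidable (u ≠ v ∧ ω s(u, v) = true) from instDecidableAnd

/-- `(v, L, K)` forms an `(ℓ,k)`-blocking star in `G`: the centre `v` has degree `ℓ + k`,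
the `ℓ` blocking leaves in `L` have degree 1 (their only neighbour is `v`), and the `k`
connectors in `K` are adjacent to `v` (their degrees are unrestricted). -/
def IsBStar {n : ℕ} (ℓ k : ℕ) (G : SimpleGraph (Fin n)) [DecidableRel G.Adj]
    (v : Fin n) (L K : Finset (Fin n)) : Prop :=
  L.card = ℓ ∧ K.card = k ∧ Disjoint L K ∧ v ∉ L ∧ v ∉ K ∧
    (∀ u ∈ L, G.neighborFinset u = {v}) ∧ (∀ u ∈ K, G.Adj v u) ∧ G.degree v = ℓ + k

/-- The number of `(ℓ,k)`-blocking stars in the graph determined by `ω`. -/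
noncomputable def bStarCount (ℓ k : ℕ) {n : ℕ} (ω : Sym2 (Fin n) → Bool) : ℕ := by
  classical
  exact (Finset.univ.filter fun x : Fin n × Finset (Fin n) × Finset (Fin n) =>
    IsBStar ℓ k (graphOf ω) x.1 x.2.1 x.2.2).card

namespace BStarAux

open Finset

variable {n : ℕ}

def starSet (v : Fin n) (L K : Finset (Fin n)) : Finset (Sym2 (Fin n)) :=
  (L ∪ K).image fun u => s(v, u)

open Classical in
noncomputable def badSet (v : Fin n) (L K : Finset (Fin n)) : Finset (Sym2 (Fin n)) :=
  Finset.univ.filter fun e => e ∉ starSet v L K ∧ ¬ e.IsDiag ∧ (v ∈ e ∨ ∃ u ∈ L, u ∈ e)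

open Classical in
lemma mem_badSet {v : Fin n} {L K : Finset (Fin n)} {e : Sym2 (Fin n)} :
    e ∈ badSet v L K ↔ e ∉ starSet v L K ∧ ¬ e.IsDiag ∧ (v ∈ e ∨ ∃ u ∈ L, u ∈ e) := by
  simp [badSet]

lemma card_starSet {v : Fin n} {L K : Finset (Fin n)} (hvL : v ∉ L) (hvK : v ∉ K) :
    (starSet v L K).card = (L ∪ K).card := by
  rw [starSet, card_image_of_injOn]
  exact fun a _ b _ hab => Sym2.congr_right.mp hab

lemma mem_starSet {v : Fin n} {L K : Finset (Fin n)} {e : Sym2 (Fin n)} :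
    e ∈ starSet v L K ↔ ∃ u ∈ L ∪ K, e = s(v, u) := by
  simp [starSet, eq_comm]

end BStarAux

namespace BStarAux
open Finset
variable {n : ℕ}

lemma graphOf_adj {ω : Sym2 (Fin n) → Bool} {u v : Fin n} :
    (graphOf ω).Adj u v ↔ u ≠ v ∧ ω s(u, v) = true := Iff.rfl

lemma isBStar_iff {ℓ k : ℕ} {v : Fin n} {L K : Finset (Fin n)}
    (hL : L.card = ℓ) (hK : K.card = k) (hdisj : Disjoint L K) (hvL : v ∉ L) (hvK : v ∉ K)
    (ω : Sym2 (Fin n) → Bool) :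
    IsBStar ℓ k (graphOf ω) v L K ↔
      (∀ e ∈ starSet v L K, ω e = true) ∧ (∀ e ∈ badSet v L K, ω e = false) := by
  have hvLK : v ∉ L ∪ K := by simp [hvL, hvK]
  constructor
  · rintro ⟨-, -, -, -, -, h6, h7, h8⟩
    have hsub : L ∪ K ⊆ (graphOf ω).neighborFinset v := by
      intro u hu
      rw [SimpleGraph.mem_neighborFinset]
      rcases Finset.mem_union.mp hu with hu | hu
      · have h := h6 u hu
        have hv : v ∈ (graphOf ω).neighborFinset u := by
          rw [h]; exact Finset.mem_singleton_self v
        exact ((SimpleGraph.mem_neighborFinset _ _ _).mp hv).symm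
      · exact h7 u hu
    have hnb : (graphOf ω).neighborFinset v = L ∪ K := by
      refine (Finset.eq_of_subset_of_card_le hsub ?_).symm
      rw [Finset.card_union_of_disjoint hdisj, hL, hK,
        SimpleGraph.card_neighborFinset_eq_degree, h8]
    constructor
    · intro e he
      rw [mem_starSet] at he
      obtain ⟨u, hu, rfl⟩ := he
      have : (graphOf ω).Adj v u := by
        rw [← SimpleGraph.mem_neighborFinset, hnb]; exact hu
      exact (graphOf_adj.mp this).2
    · intro e he
      rw [mem_badSet] at he
      obtain ⟨hns, hnd, hmem⟩ := he
      by_contra htrue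
      have htrue : ω e = true := by simpa using htrue
      rcases hmem with hv | ⟨u, huL, hue⟩
      · obtain ⟨w, rfl⟩ := Sym2.mem_iff_exists.mp hv
        have hwv : v ≠ w := fun h => hnd (by rw [← h]; exact Sym2.mk_isDiag_iff.mpr rfl)
        have hadj : (graphOf ω).Adj v w := graphOf_adj.mpr ⟨hwv, htrue⟩
        have hw : w ∈ L ∪ K := by rw [← hnb, SimpleGraph.mem_neighborFinset]; exact hadj
        exact hns (mem_starSet.mpr ⟨w, hw, rfl⟩)
      · obtain ⟨w, rfl⟩ := Sym2.mem_iff_exists.mp hue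
        have huw : u ≠ w := fun h => hnd (by rw [← h]; exact Sym2.mk_isDiag_iff.mpr rfl)
        have hadj : (graphOf ω).Adj u w := graphOf_adj.mpr ⟨huw, htrue⟩
        have hw : w ∈ (graphOf ω).neighborFinset u :=
          (SimpleGraph.mem_neighborFinset _ _ _).mpr hadj
        rw [h6 u huL, Finset.mem_singleton] at hw
        subst hw
        exact hns (mem_starSet.mpr ⟨u, Finset.mem_union_left _ huL, Sym2.eq_swap⟩)
  · rintro ⟨hstar, hbad⟩
    have hadjLK : ∀ u ∈ L ∪ K, (graphOf ω).Adj v u := by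
      intro u hu
      exact graphOf_adj.mpr ⟨fun h => hvLK (h ▸ hu), hstar _ (mem_starSet.mpr ⟨u, hu, rfl⟩)⟩
    have hnadj : ∀ w, w ∉ L ∪ K → w ≠ v → ¬ (graphOf ω).Adj v w := by
      intro w hw hwv hadj
      have hmem : s(v, w) ∈ badSet v L K := by
        rw [mem_badSet]
        refine ⟨?_, ?_, Or.inl (Sym2.mem_mk_left _ _)⟩
        · intro hs
          rw [mem_starSet] at hs
          obtain ⟨u, hu, he⟩ := hs
          exact hw ((Sym2.congr_right.mp he) ▸ hu)
        · rw [Sym2.mk_isDiag_iff]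
          exact fun h => hwv h.symm
      have := hbad _ hmem
      rw [(graphOf_adj.mp hadj).2] at this
      simp at this
    have hnb : (graphOf ω).neighborFinset v = L ∪ K := by
      ext w
      rw [SimpleGraph.mem_neighborFinset]
      constructor
      · intro hadj
        by_contra hw
        exact hnadj w hw hadj.ne' hadj
      · exact hadjLK w
    have hleaf : ∀ u ∈ L, (graphOf ω).neighborFinset u = {v} := by
      intro u huL
      ext w
      rw [SimpleGraph.mem_neighborFinset, Finset.mem_singleton]
      constructor
      · intro hadj
        by_contra hwv
        have hmem : s(u, w) ∈ badSet v L K := by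
          rw [mem_badSet]
          refine ⟨?_, ?_, Or.inr ⟨u, huL, Sym2.mem_mk_left _ _⟩⟩
          · intro hs
            rw [mem_starSet] at hs
            obtain ⟨x, hx, he⟩ := hs
            have hv : v ∈ s(u, w) := he ▸ Sym2.mem_mk_left v x
            rcases Sym2.mem_iff.mp hv with h | h
            · exact hvL (h ▸ huL)
            · exact hwv h.symm
          · rw [Sym2.mk_isDiag_iff]; exact hadj.ne
        have := hbad _ hmem
        rw [(graphOf_adj.mp hadj).2] at this
        simp at this
      · rintro rfl
        exact (hadjLK u (Finset.mem_union_left _ huL)).symm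
    refine ⟨hL, hK, hdisj, hvL, hvK, hleaf,
      fun u hu => hadjLK u (Finset.mem_union_right _ hu), ?_⟩
    rw [← SimpleGraph.card_neighborFinset_eq_degree, hnb,
      Finset.card_union_of_disjoint hdisj, hL, hK]

end BStarAux

namespace BStarAux
open Finset
variable {n : ℕ}

lemma measurableSet_all (s : Set (Sym2 (Fin n) → Bool)) : MeasurableSet s := by
  have h : s = ⋃ x ∈ s, {x} := by simp
  rw [h]
  refine MeasurableSet.biUnion s.to_countable (fun x _ => ?_)
  rw [← Set.univ_pi_singleton x]
  exact MeasurableSet.univ_pi fun e => MeasurableSpace.measurableSet_top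

open Classical in
lemma gnp_event {p : ℝ} (hp0 : 0 ≤ p) (hp1 : p ≤ 1) {ℓ k : ℕ} {v : Fin n} {L K : Finset (Fin n)}
    (hL : L.card = ℓ) (hK : K.card = k) (hdisj : Disjoint L K) (hvL : v ∉ L) (hvK : v ∉ K) :
    gnp n p {ω | IsBStar ℓ k (graphOf ω) v L K}
      = ENNReal.ofReal p ^ (ℓ + k) * ENNReal.ofReal (1 - p) ^ (badSet v L K).card := by
  have hq1 : ENNReal.ofReal p ≤ 1 := ENNReal.ofReal_le_one.mpr hp1
  have hqmin : min (ENNReal.ofReal p) 1 = ENNReal.ofReal p := min_eq_left hq1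
  set q : ENNReal := ENNReal.ofReal p with hqdef
  set S : Sym2 (Fin n) → Set Bool := fun e =>
    if e ∈ starSet v L K then {true} else if e ∈ badSet v L K then {false} else Set.univ with hS
  have hevent : {ω : Sym2 (Fin n) → Bool | IsBStar ℓ k (graphOf ω) v L K}
      = Set.univ.pi S := by
    ext ω
    rw [Set.mem_setOf_eq, isBStar_iff hL hK hdisj hvL hvK ω]
    constructor
    · rintro ⟨h1, h2⟩ e -
      by_cases hs : e ∈ starSet v L K
      · simp [hS, hs, h1 e hs]
      · by_cases hb : e ∈ badSet v L K
        · simp [hS, hs, hb, h2 e hb]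
        · simp [hS, hs, hb]
    · intro h
      constructor
      · intro e he
        have := h e (Set.mem_univ e)
        simpa [hS, he] using this
      · intro e he
        have hns : e ∉ starSet v L K := (mem_badSet.mp he).1
        have := h e (Set.mem_univ e)
        simpa [hS, he, hns] using this
  have hqmin' : min (Real.toNNReal p) 1 = Real.toNNReal p :=
    min_eq_left (Real.toNNReal_le_one.mpr hp1)
  set β := (PMF.bernoulli (min (Real.toNNReal p) 1) (min_le_right _ _)).toMeasure with hβ
  have htrue : β {true} = q := by
    rw [hβ, PMF.toMeasure_apply_singleton _ _ MeasurableSpace.measurableSet_top]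
    simp [PMF.bernoulli_apply, hqmin', hqdef, ENNReal.ofReal]
  have hfalse : β {false} = 1 - q := by
    rw [hβ, PMF.toMeasure_apply_singleton _ _ MeasurableSpace.measurableSet_top]
    simp [PMF.bernoulli_apply, hqmin', hqdef, ENNReal.ofReal]
  have huniv : β Set.univ = 1 := by
    rw [hβ]; exact measure_univ
  have hβS : ∀ e, β (S e) = if e ∈ starSet v L K then q
      else if e ∈ badSet v L K then 1 - q else 1 := by
    intro e
    by_cases hs : e ∈ starSet v L K
    · have hSe : S e = {true} := by simp [hS, hs]
      rw [if_pos hs, hSe, htrue]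
    · by_cases hb : e ∈ badSet v L K
      · have hSe : S e = {false} := by simp [hS, hs, hb]
        rw [if_neg hs, if_pos hb, hSe, hfalse]
      · have hSe : S e = Set.univ := by simp [hS, hs, hb]
        rw [if_neg hs, if_neg hb, hSe, huniv]
  have hdisjSB : Disjoint (starSet v L K) (badSet v L K) := by
    rw [Finset.disjoint_left]
    exact fun a ha hb => (mem_badSet.mp hb).1 ha
  rw [hevent, gnp, Measure.pi_pi]
  have hsplit : ∀ f : Sym2 (Fin n) → ENNReal,
      (∀ e ∈ starSet v L K, f e = q) → (∀ e ∈ badSet v L K, f e = 1 - q) →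
      (∀ e, e ∉ starSet v L K → e ∉ badSet v L K → f e = 1) →
      ∏ e, f e = q ^ (starSet v L K).card * (1 - q) ^ (badSet v L K).card := by
    intro f h1 h2 h3
    rw [← Finset.prod_sdiff (Finset.subset_univ (starSet v L K ∪ badSet v L K))]
    have hone : ∏ e ∈ Finset.univ \ (starSet v L K ∪ badSet v L K), f e = 1 := by
      refine Finset.prod_eq_one fun e he => ?_
      rw [Finset.mem_sdiff, Finset.mem_union] at he
      exact h3 e (fun h => he.2 (Or.inl h)) (fun h => he.2 (Or.inr h))
    rw [hone, one_mul, Finset.prod_union hdisjSB,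
      Finset.prod_congr rfl h1, Finset.prod_congr rfl h2,
      Finset.prod_const, Finset.prod_const]
  rw [hsplit _ (fun e he => by rw [hβS, if_pos he])
      (fun e he => by rw [hβS, if_neg ((mem_badSet.mp he).1), if_pos he])
      (fun e hs hb => by rw [hβS, if_neg hs, if_neg hb])]
  rw [card_starSet hvL hvK, Finset.card_union_of_disjoint hdisj, hL, hK]
  have : (1 : ENNReal) - q = ENNReal.ofReal (1 - p) := by
    rw [hqdef, ← ENNReal.ofReal_one, ← ENNReal.ofReal_sub _ hp0]
  rw [this]

end BStarAux

namespace BStarAux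
open Finset
variable {n : ℕ}

lemma badSet_card_le {ℓ : ℕ} {v : Fin n} {L K : Finset (Fin n)}
    (hL : L.card = ℓ) (hvL : v ∉ L) :
    (badSet v L K).card ≤ (ℓ + 1) * n := by
  classical
  have hsub : badSet v L K ⊆ (insert v L).biUnion
      (fun t => Finset.univ.image fun w => s(t, w)) := by
    intro e he
    obtain ⟨-, -, hmem⟩ := mem_badSet.mp he
    rw [Finset.mem_biUnion]
    rcases hmem with hv | ⟨u, huL, hue⟩
    · obtain ⟨w, rfl⟩ := Sym2.mem_iff_exists.mp hv
      exact ⟨v, Finset.mem_insert_self _ _, Finset.mem_image.mpr ⟨w, Finset.mem_univ _, rfl⟩⟩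
    · obtain ⟨w, rfl⟩ := Sym2.mem_iff_exists.mp hue
      exact ⟨u, Finset.mem_insert_of_mem huL, Finset.mem_image.mpr ⟨w, Finset.mem_univ _, rfl⟩⟩
  calc (badSet v L K).card ≤ _ := Finset.card_le_card hsub
    _ ≤ ∑ t ∈ insert v L, (Finset.univ.image fun w => s(t, w)).card := Finset.card_biUnion_le
    _ ≤ ∑ _t ∈ insert v L, n := Finset.sum_le_sum fun t _ =>
        Finset.card_image_le.trans (by simp)
    _ = (ℓ + 1) * n := by
        rw [Finset.sum_const, Finset.card_insert_of_notMem hvL, hL, smul_eq_mul, add_comm]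

lemma le_badSet_card {ℓ k : ℕ} {v : Fin n} {L K : Finset (Fin n)}
    (hL : L.card = ℓ) (hK : K.card = k) (hdisj : Disjoint L K) (hvL : v ∉ L) (hvK : v ∉ K) :
    (ℓ + 1) * (n - (1 + ℓ + k)) ≤ (badSet v L K).card := by
  classical
  have hvLK : v ∉ L ∪ K := by simp [hvL, hvK]
  set T : Finset (Fin n) := insert v L with hT
  set W : Finset (Fin n) := Finset.univ \ insert v (L ∪ K) with hW
  have hTsub : T ⊆ insert v (L ∪ K) := by
    intro t ht
    rcases Finset.mem_insert.mp ht with rfl | ht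
    · exact Finset.mem_insert_self _ _
    · exact Finset.mem_insert_of_mem (Finset.mem_union_left _ ht)
  have hcard : (T ×ˢ W).card = (ℓ + 1) * (n - (1 + ℓ + k)) := by
    rw [Finset.card_product, hT, hW, Finset.card_insert_of_notMem hvL, hL,
      Finset.card_sdiff_of_subset (Finset.subset_univ _), Finset.card_insert_of_notMem hvLK,
      Finset.card_union_of_disjoint hdisj, hL, hK, Finset.card_univ, Fintype.card_fin,
      add_comm ℓ 1]
    ring_nf
  rw [← hcard]
  refine Finset.card_le_card_of_injOn (fun x => s(x.1, x.2)) ?_ ?_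
  · rintro ⟨t, w⟩ hx
    rw [Finset.mem_coe, Finset.mem_product] at hx
    obtain ⟨ht, hw⟩ := hx
    have hwn : w ∉ insert v (L ∪ K) := (Finset.mem_sdiff.mp hw).2
    have htw : t ≠ w := fun h => hwn (hTsub (h ▸ ht))
    rw [Finset.mem_coe, mem_badSet]
    refine ⟨?_, by rwa [Sym2.mk_isDiag_iff], ?_⟩
    · intro hs
      rw [mem_starSet] at hs
      obtain ⟨u, hu, he⟩ := hs
      have he' : s(t, w) = s(v, u) := he
      have hv : v ∈ s(t, w) := he' ▸ Sym2.mem_mk_left v u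
      rcases Sym2.mem_iff.mp hv with h | h
      · subst h
        have : w = u := Sym2.congr_right.mp he'
        exact hwn (Finset.mem_insert_of_mem (this ▸ hu))
      · exact hwn (h ▸ Finset.mem_insert_self _ _)
    · rcases Finset.mem_insert.mp ht with rfl | ht
      · exact Or.inl (Sym2.mem_mk_left _ _)
      · exact Or.inr ⟨t, ht, Sym2.mem_mk_left _ _⟩
  · rintro ⟨t, w⟩ hx ⟨t', w'⟩ hx' he
    rw [Finset.mem_coe, Finset.mem_product] at hx hx'
    rw [Sym2.mk_eq_mk_iff] at he
    rcases he with he | he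
    · exact he
    · exfalso
      have h1 : t = w' := congrArg Prod.fst he
      exact (Finset.mem_sdiff.mp hx'.2).2 (hTsub (h1 ▸ hx.1))

open Classical in
lemma card_valid (ℓ k n : ℕ) :
    ((Finset.univ : Finset (Fin n × Finset (Fin n) × Finset (Fin n))).filter fun x =>
      x.2.1.card = ℓ ∧ x.2.2.card = k ∧ Disjoint x.2.1 x.2.2 ∧ x.1 ∉ x.2.1 ∧ x.1 ∉ x.2.2).card
    = n * ((n - 1).choose ℓ * (n - 1 - ℓ).choose k) := by
  classical
  rw [Finset.card_filter, Fintype.sum_prod_type]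
  have hv : ∀ v : Fin n, (∑ y : Finset (Fin n) × Finset (Fin n),
      if y.1.card = ℓ ∧ y.2.card = k ∧ Disjoint y.1 y.2 ∧ v ∉ y.1 ∧ v ∉ y.2 then 1 else 0)
      = (n - 1).choose ℓ * (n - 1 - ℓ).choose k := by
    intro v
    rw [Fintype.sum_prod_type]
    have herase : ((Finset.univ : Finset (Fin n)).erase v).card = n - 1 := by
      rw [Finset.card_erase_of_mem (Finset.mem_univ v), Finset.card_univ, Fintype.card_fin]
    have hLsum : ∀ L : Finset (Fin n), (∑ K : Finset (Fin n),
        if L.card = ℓ ∧ K.card = k ∧ Disjoint L K ∧ v ∉ L ∧ v ∉ K then 1 else 0)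
        = if L ∈ Finset.powersetCard ℓ ((Finset.univ : Finset (Fin n)).erase v)
          then (n - 1 - ℓ).choose k else 0 := by
      intro L
      by_cases hLc : L.card = ℓ ∧ v ∉ L
      · have hLmem : L ∈ Finset.powersetCard ℓ (Finset.univ.erase v) := by
          rw [Finset.mem_powersetCard]
          exact ⟨fun x hx => Finset.mem_erase.mpr ⟨fun h => hLc.2 (h ▸ hx), Finset.mem_univ x⟩,
            hLc.1⟩
        rw [if_pos hLmem]
        have hiff : ∀ K : Finset (Fin n),
            (L.card = ℓ ∧ K.card = k ∧ Disjoint L K ∧ v ∉ L ∧ v ∉ K)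
            ↔ K ∈ Finset.powersetCard k ((Finset.univ.erase v) \ L) := by
          intro K
          rw [Finset.mem_powersetCard]
          constructor
          · rintro ⟨-, hKk, hdisj, -, hvK⟩
            refine ⟨fun x hx => ?_, hKk⟩
            rw [Finset.mem_sdiff, Finset.mem_erase]
            exact ⟨⟨fun h => hvK (h ▸ hx), Finset.mem_univ x⟩,
              Finset.disjoint_right.mp hdisj hx⟩
          · rintro ⟨hsub, hKk⟩
            refine ⟨hLc.1, hKk, ?_, hLc.2, fun hvK => ?_⟩
            · rw [Finset.disjoint_right]
              exact fun x hx => (Finset.mem_sdiff.mp (hsub hx)).2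
            · exact (Finset.mem_erase.mp (Finset.mem_sdiff.mp (hsub hvK)).1).1 rfl
        simp only [hiff]
        rw [Finset.sum_ite_mem, Finset.univ_inter, Finset.sum_const, smul_eq_mul, mul_one,
          Finset.card_powersetCard, Finset.card_sdiff_of_subset
            (Finset.mem_powersetCard.mp hLmem).1, herase, hLc.1]
      · have h1 : ∀ K : Finset (Fin n),
            ¬(L.card = ℓ ∧ K.card = k ∧ Disjoint L K ∧ v ∉ L ∧ v ∉ K) := by
          intro K hc
          exact hLc ⟨hc.1, hc.2.2.2.1⟩
        have h2 : L ∉ Finset.powersetCard ℓ (Finset.univ.erase v) := by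
          intro hmem
          obtain ⟨hsub, hcard⟩ := Finset.mem_powersetCard.mp hmem
          exact hLc ⟨hcard, fun hvL => (Finset.mem_erase.mp (hsub hvL)).1 rfl⟩
        rw [if_neg h2]
        exact Finset.sum_eq_zero fun K _ => if_neg (h1 K)
    simp only [hLsum]
    rw [Finset.sum_ite_mem, Finset.univ_inter, Finset.sum_const, smul_eq_mul,
      Finset.card_powersetCard, herase]
  simp only [hv]
  rw [Finset.sum_const, Finset.card_univ, Fintype.card_fin, smul_eq_mul]

end BStarAux

namespace BStarAux
open Finset

open Classical in
lemma integral_eq {p : ℝ} (hp0 : 0 ≤ p) (hp1 : p ≤ 1) (ℓ k n : ℕ) :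
    ∫ ω, (bStarCount ℓ k ω : ℝ) ∂(gnp n p)
      = ∑ x ∈ ((Finset.univ : Finset (Fin n × Finset (Fin n) × Finset (Fin n))).filter fun x =>
          x.2.1.card = ℓ ∧ x.2.2.card = k ∧ Disjoint x.2.1 x.2.2 ∧ x.1 ∉ x.2.1 ∧ x.1 ∉ x.2.2),
        p ^ (ℓ + k) * (1 - p) ^ (badSet x.1 x.2.1 x.2.2).card := by
  classical
  haveI hprob : IsProbabilityMeasure (gnp n p) := by
    rw [gnp]; infer_instance
  have hcount : ∀ ω : Sym2 (Fin n) → Bool, (bStarCount ℓ k ω : ℝ)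
      = ∑ x : Fin n × Finset (Fin n) × Finset (Fin n),
        Set.indicator {ω' : Sym2 (Fin n) → Bool |
          IsBStar ℓ k (graphOf ω') x.1 x.2.1 x.2.2} (fun _ => (1 : ℝ)) ω := by
    intro ω
    simp only [bStarCount, Finset.card_filter, Nat.cast_sum]
    refine Finset.sum_congr rfl fun x _ => ?_
    by_cases hx : IsBStar ℓ k (graphOf ω) x.1 x.2.1 x.2.2
    · simp [hx, Set.indicator_apply]
    · simp [hx, Set.indicator_apply]
  have hint : ∀ x : Fin n × Finset (Fin n) × Finset (Fin n),
      Integrable (Set.indicator {ω' : Sym2 (Fin n) → Bool |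
        IsBStar ℓ k (graphOf ω') x.1 x.2.1 x.2.2} (fun _ => (1 : ℝ))) (gnp n p) :=
    fun x => (integrable_const (1 : ℝ)).indicator (measurableSet_all _)
  rw [MeasureTheory.integral_congr_ae (Filter.Eventually.of_forall hcount),
    MeasureTheory.integral_finset_sum _ fun x _ => hint x]
  have hterm : ∀ x : Fin n × Finset (Fin n) × Finset (Fin n),
      ∫ ω, Set.indicator {ω' : Sym2 (Fin n) → Bool |
        IsBStar ℓ k (graphOf ω') x.1 x.2.1 x.2.2} (fun _ => (1 : ℝ)) ω ∂(gnp n p)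
      = ((gnp n p) {ω' | IsBStar ℓ k (graphOf ω') x.1 x.2.1 x.2.2}).toReal := by
    intro x
    rw [MeasureTheory.integral_indicator_const _ (measurableSet_all _), smul_eq_mul, mul_one]
    rfl
  simp only [hterm]
  rw [← Finset.sum_filter_add_sum_filter_not Finset.univ
    (fun x : Fin n × Finset (Fin n) × Finset (Fin n) =>
      x.2.1.card = ℓ ∧ x.2.2.card = k ∧ Disjoint x.2.1 x.2.2 ∧ x.1 ∉ x.2.1 ∧ x.1 ∉ x.2.2)]
  have hzero : ∀ x ∈ Finset.univ.filter (fun x : Fin n × Finset (Fin n) × Finset (Fin n) =>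
      ¬(x.2.1.card = ℓ ∧ x.2.2.card = k ∧ Disjoint x.2.1 x.2.2 ∧ x.1 ∉ x.2.1 ∧ x.1 ∉ x.2.2)),
      ((gnp n p) {ω' | IsBStar ℓ k (graphOf ω') x.1 x.2.1 x.2.2}).toReal = 0 := by
    intro x hx
    rw [Finset.mem_filter] at hx
    have : {ω' : Sym2 (Fin n) → Bool | IsBStar ℓ k (graphOf ω') x.1 x.2.1 x.2.2} = ∅ := by
      ext ω'
      simp only [Set.mem_setOf_eq, Set.mem_empty_iff_false, iff_false]
      rintro ⟨h1, h2, h3, h4, h5, -⟩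
      exact hx.2 ⟨h1, h2, h3, h4, h5⟩
    rw [this]
    simp
  rw [Finset.sum_congr rfl hzero, Finset.sum_const, smul_zero, add_zero]
  refine Finset.sum_congr rfl fun x hx => ?_
  rw [Finset.mem_filter] at hx
  obtain ⟨-, h1, h2, h3, h4, h5⟩ := hx
  rw [gnp_event hp0 hp1 h1 h2 h3 h4 h5]
  rw [ENNReal.toReal_mul, ENNReal.toReal_pow, ENNReal.toReal_pow,
    ENNReal.toReal_ofReal hp0, ENNReal.toReal_ofReal (sub_nonneg.mpr hp1)]

end BStarAux

namespace BStarAux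
open Filter

lemma log_one_sub_le {x : ℝ} (h2 : x < 1) : Real.log (1 - x) ≤ -x := by
  have hx1 : (0:ℝ) < 1 - x := by linarith
  have := Real.log_le_sub_one_of_pos hx1
  linarith

lemma le_log_one_sub {x : ℝ} (h0 : 0 ≤ x) (h2 : x ≤ 1/2) :
    -x - 2*x^2 ≤ Real.log (1 - x) := by
  have hx1 : (0:ℝ) < 1 - x := by linarith
  have hpos : (0:ℝ) < 1 + (x + 2*x^2) := by nlinarith
  have h1 : Real.exp (-(x + 2*x^2)) ≤ 1 - x := by
    rw [Real.exp_neg]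
    have he : 1 + (x + 2*x^2) ≤ Real.exp (x + 2*x^2) := by
      have := Real.add_one_le_exp (x + 2*x^2); linarith
    have hinv : (Real.exp (x + 2*x^2))⁻¹ ≤ (1 + (x + 2*x^2))⁻¹ := by
      exact inv_anti₀ hpos he
    refine hinv.trans ?_
    rw [inv_eq_one_div, div_le_iff₀ hpos]
    nlinarith
  have := Real.log_le_log (Real.exp_pos _) h1
  rw [Real.log_exp] at this
  linarith

lemma tendsto_log_pow_div (c : ℝ) (m : ℕ) :
    Tendsto (fun n : ℕ => c * Real.log n ^ m / n) atTop (nhds 0) := by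
  have base : Tendsto (fun x : ℝ => Real.log x ^ m / (1 * x + 0)) atTop (nhds 0) :=
    Real.tendsto_pow_log_div_mul_add_atTop 1 0 m one_ne_zero
  have base' : Tendsto (fun x : ℝ => Real.log x ^ m / x) atTop (nhds 0) := by
    refine base.congr fun x => by rw [one_mul, add_zero]
  have comp : Tendsto (fun n : ℕ => Real.log n ^ m / n) atTop (nhds 0) :=
    base'.comp tendsto_natCast_atTop_atTop
  have := comp.const_mul c
  rw [mul_zero] at this
  refine this.congr fun n => by ring

lemma tendsto_sub_div (A : ℝ) :
    Tendsto (fun n : ℕ => ((n : ℝ) - A) / n) atTop (nhds 1) := by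
  have h : Tendsto (fun n : ℕ => 1 - A * (n : ℝ)⁻¹) atTop (nhds (1 - A * 0)) :=
    tendsto_const_nhds.sub (tendsto_const_nhds.mul tendsto_inv_atTop_nhds_zero_nat)
  rw [mul_zero, sub_zero] at h
  refine h.congr' ?_
  filter_upwards [eventually_ge_atTop 1] with n hn
  have hn0 : (n : ℝ) ≠ 0 := Nat.cast_ne_zero.mpr (by omega)
  field_simp

end BStarAux

namespace BStarAux
open Filter Finset

lemma tendsto_F (ℓ k : ℕ) :
    Tendsto (fun n : ℕ => ((n * ((n-1).choose ℓ * (n-1-ℓ).choose k) : ℕ) : ℝ)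
      * ((Nat.factorial ℓ : ℝ) * (Nat.factorial k : ℝ)) / (n:ℝ)^(ℓ+k+1))
      atTop (nhds 1) := by
  have hQ1 : Tendsto (fun n : ℕ => ∏ i ∈ Finset.range ℓ, (((n:ℝ) - (1+i))/n))
      atTop (nhds 1) := by
    have := tendsto_finset_prod (f := fun (i : ℕ) (n : ℕ) => ((n:ℝ) - (1+i))/n)
      (a := fun _ => (1:ℝ)) (Finset.range ℓ) (fun i _ => tendsto_sub_div (1+i))
    simpa using this
  have hQ2 : Tendsto (fun n : ℕ => ∏ j ∈ Finset.range k, (((n:ℝ) - (1+ℓ+j))/n))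
      atTop (nhds 1) := by
    have := tendsto_finset_prod (f := fun (j : ℕ) (n : ℕ) => ((n:ℝ) - (1+ℓ+j))/n)
      (a := fun _ => (1:ℝ)) (Finset.range k) (fun j _ => tendsto_sub_div (1+ℓ+j))
    simpa using this
  have hQ := hQ1.mul hQ2
  rw [one_mul] at hQ
  refine hQ.congr' ?_
  filter_upwards [eventually_ge_atTop (ℓ+k+1)] with n hn
  have hn0 : (n : ℝ) ≠ 0 := Nat.cast_ne_zero.mpr (by omega)
  have hD1 : (((n-1).descFactorial ℓ : ℕ) : ℝ) = ∏ i ∈ Finset.range ℓ, ((n:ℝ) - (1+i)) := by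
    rw [Nat.descFactorial_eq_prod_range, Nat.cast_prod]
    refine Finset.prod_congr rfl fun i hi => ?_
    rw [Finset.mem_range] at hi
    rw [Nat.cast_sub (by omega : i ≤ n - 1), Nat.cast_sub (by omega : 1 ≤ n)]
    push_cast
    ring
  have hD2 : (((n-1-ℓ).descFactorial k : ℕ) : ℝ) = ∏ j ∈ Finset.range k, ((n:ℝ) - (1+ℓ+j)) := by
    rw [Nat.descFactorial_eq_prod_range, Nat.cast_prod]
    refine Finset.prod_congr rfl fun j hj => ?_
    rw [Finset.mem_range] at hj
    rw [Nat.cast_sub (by omega : j ≤ n - 1 - ℓ), Nat.cast_sub (by omega : ℓ ≤ n - 1),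
      Nat.cast_sub (by omega : 1 ≤ n)]
    push_cast
    ring
  have hnat : n * ((n-1).choose ℓ * (n-1-ℓ).choose k) * (Nat.factorial ℓ * Nat.factorial k)
      = n * ((n-1).descFactorial ℓ) * ((n-1-ℓ).descFactorial k) := by
    rw [Nat.descFactorial_eq_factorial_mul_choose, Nat.descFactorial_eq_factorial_mul_choose]
    ring
  have hcast : ((n * ((n-1).choose ℓ * (n-1-ℓ).choose k) : ℕ) : ℝ)
      * ((Nat.factorial ℓ : ℝ) * (Nat.factorial k : ℝ))
      = (n : ℝ) * (∏ i ∈ Finset.range ℓ, ((n:ℝ) - (1+i)))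
        * (∏ j ∈ Finset.range k, ((n:ℝ) - (1+ℓ+j))) := by
    rw [← hD1, ← hD2]
    exact_mod_cast hnat
  have hpow1 : ∏ i ∈ Finset.range ℓ, (((n:ℝ) - (1+i))/n)
      = (∏ i ∈ Finset.range ℓ, ((n:ℝ) - (1+i))) / (n:ℝ)^ℓ := by
    rw [Finset.prod_div_distrib, Finset.prod_const, Finset.card_range]
  have hpow2 : ∏ j ∈ Finset.range k, (((n:ℝ) - (1+ℓ+j))/n)
      = (∏ j ∈ Finset.range k, ((n:ℝ) - (1+ℓ+j))) / (n:ℝ)^k := by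
    rw [Finset.prod_div_distrib, Finset.prod_const, Finset.card_range]
  rw [hpow1, hpow2, hcast]
  field_simp
  ring

lemma tendsto_nlog (d : ℕ → ℝ) (c : ℝ)
    (hd1 : ∀ᶠ n in atTop, 1 ≤ d n)
    (hlog : ∀ᶠ n in atTop, d n ≤ c * Real.log n)
    (hhalf : ∀ᶠ n in atTop, d n / n ≤ 1/2) :
    Tendsto (fun n : ℕ => (n:ℝ) * Real.log (1 - d n / n) + d n) atTop (nhds 0) := by
  have hlhs : Tendsto (fun n : ℕ => -(2 * c^2 * Real.log n ^ 2 / n)) atTop (nhds 0) := by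
    have := (tendsto_log_pow_div (2*c^2) 2).neg
    rw [neg_zero] at this
    refine this.congr fun n => by ring
  refine tendsto_of_tendsto_of_tendsto_of_le_of_le' hlhs tendsto_const_nhds ?_ ?_
  · filter_upwards [hd1, hlog, hhalf, eventually_ge_atTop 1] with n h1 h2 h3 h4
    have hn0 : (0:ℝ) < n := by exact_mod_cast Nat.pos_of_ne_zero (by omega)
    have hx0 : 0 ≤ d n / n := div_nonneg (by linarith) hn0.le
    have hlb := le_log_one_sub hx0 h3
    have hmul : (n:ℝ) * (-(d n / n) - 2*(d n / n)^2) ≤ (n:ℝ) * Real.log (1 - d n / n) :=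
      mul_le_mul_of_nonneg_left hlb hn0.le
    have hxx : (n:ℝ) * (-(d n / n) - 2*(d n / n)^2) = -(d n) - 2*(d n ^2 / n) := by
      field_simp
    have hcl : 0 ≤ c * Real.log n := le_trans (by linarith) h2
    have hsq : d n ^ 2 ≤ c^2 * Real.log n ^ 2 := by nlinarith
    have hdiv : d n ^ 2 / n ≤ c^2 * Real.log n ^ 2 / n := by gcongr
    rw [hxx] at hmul
    have h2e : 2 * c ^ 2 * Real.log n ^ 2 / n = 2 * (c ^ 2 * Real.log n ^ 2 / n) := by ring
    linarith
  · filter_upwards [hd1, hhalf, eventually_ge_atTop 1] with n h1 h3 h4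
    have hn0 : (0:ℝ) < n := by exact_mod_cast Nat.pos_of_ne_zero (by omega)
    have hub := log_one_sub_le (x := d n / n) (by linarith)
    have hmul : (n:ℝ) * Real.log (1 - d n / n) ≤ (n:ℝ) * (-(d n / n)) :=
      mul_le_mul_of_nonneg_left hub hn0.le
    have : (n:ℝ) * (-(d n / n)) = -(d n) := by field_simp [mul_comm]
    rw [this] at hmul
    linarith

lemma tendsto_G (d : ℕ → ℝ) (c : ℝ) (m : ℕ)
    (hd1 : ∀ᶠ n in atTop, 1 ≤ d n)
    (hlog : ∀ᶠ n in atTop, d n ≤ c * Real.log n)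
    (hhalf : ∀ᶠ n in atTop, d n / n ≤ 1/2) :
    Tendsto (fun n : ℕ => (1 - d n / n)^(m*n) * Real.exp (d n * m)) atTop (nhds 1) := by
  have hA := tendsto_nlog d c hd1 hlog hhalf
  have hexp : Tendsto (fun n : ℕ =>
      Real.exp ((m:ℝ) * ((n:ℝ) * Real.log (1 - d n / n) + d n))) atTop (nhds 1) := by
    have h0 := hA.const_mul (m:ℝ)
    rw [mul_zero] at h0
    have := (Real.continuous_exp.tendsto 0).comp h0
    simpa [Function.comp_def] using this
  refine hexp.congr' ?_
  filter_upwards [hhalf] with n h3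
  have h1p : (0:ℝ) < 1 - d n / n := by
    have : d n / n ≤ 1/2 := h3
    linarith
  rw [mul_add, Real.exp_add]
  congr 1
  · have hc : (m:ℝ) * ((n:ℝ) * Real.log (1 - d n / n))
        = ((m*n : ℕ):ℝ) * Real.log (1 - d n / n) := by push_cast; ring
    rw [hc, ← Real.log_pow, Real.exp_log (pow_pos h1p _)]
  · rw [mul_comm]

end BStarAux

set_option maxHeartbeats 1000000 in
open Filter BStarAux in
/-- for `p = d/n` with `1 ≪ d = O(log n)`, the expected number of
`(ℓ,k)`-blocking stars in `G(n, d/n)` is asymptotic to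
`n · d^(ℓ+k) / (ℓ! k!) · e^(-d(ℓ+1))`. -/
theorem stmt16 (ℓ k : ℕ) (d : ℕ → ℝ)
    (hd : Filter.Tendsto d Filter.atTop Filter.atTop)
    (hO : ∃ c > (0 : ℝ), ∀ᶠ n in Filter.atTop, d n ≤ c * Real.log n) :
    Filter.Tendsto
      (fun n : ℕ =>
        (∫ ω, (bStarCount ℓ k ω : ℝ) ∂(gnp n (d n / n))) /
          ((n : ℝ) * d n ^ (ℓ + k) / ((Nat.factorial ℓ : ℝ) * (Nat.factorial k : ℝ)) *
            Real.exp (-(d n) * ((ℓ : ℝ) + 1))))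
      Filter.atTop (nhds 1) := by
  classical
  obtain ⟨c, hc, hO⟩ := hO
  have hd1 : ∀ᶠ n in atTop, 1 ≤ d n := hd.eventually_ge_atTop 1
  have hcl : Tendsto (fun n : ℕ => c * Real.log n ^ 1 / n) atTop (nhds 0) :=
    tendsto_log_pow_div c 1
  have hltc : ∀ᶠ n : ℕ in atTop, c * Real.log n ^ 1 / n < 1/2 :=
    hcl.eventually (eventually_lt_nhds (by norm_num : (0:ℝ) < 1/2))
  have hple : ∀ᶠ n : ℕ in atTop, d n / n ≤ c * Real.log n / n := by
    filter_upwards [hO, eventually_ge_atTop 1] with n h2 h4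
    have hn0 : (0:ℝ) < n := by exact_mod_cast Nat.pos_of_ne_zero (by omega)
    gcongr
  have hhalf : ∀ᶠ n : ℕ in atTop, d n / n ≤ 1/2 := by
    filter_upwards [hple, hltc] with n h1 h2
    rw [pow_one] at h2
    linarith
  have hp0 : ∀ᶠ n : ℕ in atTop, 0 ≤ d n / n := by
    filter_upwards [hd1] with n h1
    exact div_nonneg (by linarith) (Nat.cast_nonneg n)
  have hp1 : ∀ᶠ n : ℕ in atTop, d n / n ≤ 1 := by
    filter_upwards [hhalf] with n h; linarith
  have hptend : Tendsto (fun n : ℕ => d n / n) atTop (nhds 0) := by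
    have hcl' : Tendsto (fun n : ℕ => c * Real.log n / n) atTop (nhds 0) := by
      refine hcl.congr fun n => by rw [pow_one]
    exact tendsto_of_tendsto_of_tendsto_of_le_of_le' tendsto_const_nhds hcl' hp0 hple
  have hlow : ∀ᶠ n : ℕ in atTop,
      ((n * ((n-1).choose ℓ * (n-1-ℓ).choose k) : ℕ) : ℝ)
        * ((d n / n)^(ℓ+k) * (1 - d n / n)^((ℓ+1)*n))
      ≤ ∫ ω, (bStarCount ℓ k ω : ℝ) ∂(gnp n (d n / n)) := by
    filter_upwards [hp0, hp1, hhalf] with n h0 h1 hh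
    rw [integral_eq h0 h1 ℓ k n, ← card_valid ℓ k n, ← nsmul_eq_mul]
    refine Finset.card_nsmul_le_sum _ _ _ fun x hx => ?_
    rw [Finset.mem_filter] at hx
    obtain ⟨-, h1', h2', h3', h4', h5'⟩ := hx
    refine mul_le_mul_of_nonneg_left ?_ (pow_nonneg h0 _)
    refine pow_le_pow_of_le_one (by linarith) (by linarith) ?_
    exact badSet_card_le h1' h4'
  have hhigh : ∀ᶠ n : ℕ in atTop,
      (∫ ω, (bStarCount ℓ k ω : ℝ) ∂(gnp n (d n / n)))
      ≤ ((n * ((n-1).choose ℓ * (n-1-ℓ).choose k) : ℕ) : ℝ)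
        * ((d n / n)^(ℓ+k) * (1 - d n / n)^((ℓ+1)*(n - (1+ℓ+k)))) := by
    filter_upwards [hp0, hp1, hhalf] with n h0 h1 hh
    rw [integral_eq h0 h1 ℓ k n, ← card_valid ℓ k n, ← nsmul_eq_mul]
    refine Finset.sum_le_card_nsmul _ _ _ fun x hx => ?_
    rw [Finset.mem_filter] at hx
    obtain ⟨-, h1', h2', h3', h4', h5'⟩ := hx
    refine mul_le_mul_of_nonneg_left ?_ (pow_nonneg h0 _)
    refine pow_le_pow_of_le_one (by linarith) (by linarith) ?_
    exact le_badSet_card h1' h2' h3' h4' h5'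
  have htpos : ∀ᶠ n : ℕ in atTop,
      0 < (n : ℝ) * d n ^ (ℓ + k) / ((Nat.factorial ℓ : ℝ) * (Nat.factorial k : ℝ)) *
        Real.exp (-(d n) * ((ℓ : ℝ) + 1)) := by
    filter_upwards [hd1, eventually_ge_atTop 1] with n h1 h4
    have hn0 : (0:ℝ) < n := by exact_mod_cast Nat.pos_of_ne_zero (by omega)
    have hdpos : (0:ℝ) < d n := by linarith
    have hfl : (0:ℝ) < (Nat.factorial ℓ : ℝ) := by exact_mod_cast Nat.factorial_pos ℓ
    have hfk : (0:ℝ) < (Nat.factorial k : ℝ) := by exact_mod_cast Nat.factorial_pos k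
    positivity
  have hT1 : Tendsto (fun n : ℕ =>
      ((n * ((n-1).choose ℓ * (n-1-ℓ).choose k) : ℕ) : ℝ)
        * ((d n / n)^(ℓ+k) * (1 - d n / n)^((ℓ+1)*n)) /
      ((n : ℝ) * d n ^ (ℓ + k) / ((Nat.factorial ℓ : ℝ) * (Nat.factorial k : ℝ)) *
        Real.exp (-(d n) * ((ℓ : ℝ) + 1)))) atTop (nhds 1) := by
    have hF := tendsto_F ℓ k
    have hG := tendsto_G d c (ℓ+1) hd1 hO hhalf
    have hFG := hF.mul hG
    rw [one_mul] at hFG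
    refine hFG.congr' ?_
    filter_upwards [hd1, eventually_ge_atTop 1] with n h1 h4
    have hn0 : (n:ℝ) ≠ 0 := Nat.cast_ne_zero.mpr (by omega)
    have hdn0 : d n ≠ 0 := by linarith
    have hfl : (Nat.factorial ℓ : ℝ) ≠ 0 := Nat.cast_ne_zero.mpr (Nat.factorial_pos ℓ).ne'
    have hfk : (Nat.factorial k : ℝ) ≠ 0 := Nat.cast_ne_zero.mpr (Nat.factorial_pos k).ne'
    have hexp : Real.exp (-(d n) * ((ℓ:ℝ)+1)) = (Real.exp (d n * ((ℓ+1 : ℕ):ℝ)))⁻¹ := by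
      rw [← Real.exp_neg]
      congr 1
      push_cast
      ring
    have hexp0 : Real.exp (d n * ((ℓ+1 : ℕ):ℝ)) ≠ 0 := Real.exp_ne_zero _
    rw [hexp, div_pow]
    field_simp
    ring
  have hT2 : Tendsto (fun n : ℕ =>
      ((n * ((n-1).choose ℓ * (n-1-ℓ).choose k) : ℕ) : ℝ)
        * ((d n / n)^(ℓ+k) * (1 - d n / n)^((ℓ+1)*(n - (1+ℓ+k)))) /
      ((n : ℝ) * d n ^ (ℓ + k) / ((Nat.factorial ℓ : ℝ) * (Nat.factorial k : ℝ)) *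
        Real.exp (-(d n) * ((ℓ : ℝ) + 1)))) atTop (nhds 1) := by
    have hone : Tendsto (fun n : ℕ => ((1 - d n / n)^((ℓ+1)*(1+ℓ+k)))⁻¹) atTop (nhds 1) := by
      have hsub : Tendsto (fun n : ℕ => 1 - d n / n) atTop (nhds 1) := by
        have h := (tendsto_const_nhds : Tendsto (fun _ : ℕ => (1:ℝ)) atTop (nhds 1)).sub hptend
        rw [sub_zero] at h
        exact h
      have hbase := hsub.pow ((ℓ+1)*(1+ℓ+k))
      rw [one_pow] at hbase
      have := hbase.inv₀ one_ne_zero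
      simpa using this
    have hmul := hT1.mul hone
    rw [mul_one] at hmul
    refine hmul.congr' ?_
    filter_upwards [hhalf, htpos, eventually_ge_atTop (1+ℓ+k)] with n hh htp hn
    have hnp0 : (0:ℝ) < 1 - d n / n := by linarith
    have hsplit : (1 - d n / n)^((ℓ+1)*n)
        = (1 - d n / n)^((ℓ+1)*(n - (1+ℓ+k))) * (1 - d n / n)^((ℓ+1)*(1+ℓ+k)) := by
      rw [← pow_add, ← Nat.mul_add, Nat.sub_add_cancel hn]
    rw [hsplit]
    generalize ((n * ((n-1).choose ℓ * (n-1-ℓ).choose k) : ℕ) : ℝ) = A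
    generalize (d n / (n:ℝ))^(ℓ+k) = B
    generalize hY : (1 - d n / (n:ℝ))^((ℓ+1)*(1+ℓ+k)) = Y
    generalize (1 - d n / (n:ℝ))^((ℓ+1)*(n - (1+ℓ+k))) = X
    generalize (n : ℝ) * d n ^ (ℓ + k) / ((Nat.factorial ℓ : ℝ) * (Nat.factorial k : ℝ)) *
        Real.exp (-(d n) * ((ℓ : ℝ) + 1)) = T
    have hy : Y ≠ 0 := hY ▸ pow_ne_zero _ hnp0.ne'
    rw [show A * (B * (X * Y)) = A * (B * X) * Y by ring, div_mul_eq_mul_div, mul_assoc,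
      mul_inv_cancel₀ hy, mul_one]
  refine tendsto_of_tendsto_of_tendsto_of_le_of_le' hT1 hT2 ?_ ?_
  · filter_upwards [hlow, htpos] with n h1 h2
    exact div_le_div_of_nonneg_right h1 h2.le |>.trans_eq rfl
  · filter_upwards [hhigh, htpos] with n h1 h2
    exact div_le_div_of_nonneg_right h1 h2.le |>.trans_eq rfl
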